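/- Suppose ∫₀^∞ (1/a(x))·exp(−2B(x)) dx = ∞ and let Ω⁺(b,a) = sup_{x>0} ( ∫₀ˣ (1/a(y))·exp(−2B(y)) dy ) · ( ∫ₓ^∞ exp(2B(y)) dy ). If λ > 1/(2·Ω⁺(b,a)) (with the convention 1/∞ = 0), then there is no function u on (0,∞) with u > 0 on (0,∞), u continuous up to 0 with u(0) = 1, u differentiable, a·u′ differentiable, and (1/2)(a u′)′ + b u′ + λ u = 0 on (0,∞). -/

import Mathlib

open MeasureTheory Set Filter
open scoped ENNReal
open Topology

/-- `B(x) = ∫₀ˣ (b/a)(y) dy`. -/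
noncomputable def Bfun (a b : ℝ → ℝ) (x : ℝ) : ℝ := ∫ y in (0:ℝ)..x, b y / a y

/-- `Ω⁺(b,a) = sup_{x>0} (∫₀ˣ (1/a) e^{-2B}) (∫ₓ^∞ e^{2B}) ∈ [0,∞]`. -/
noncomputable def OmegaPlus (a b : ℝ → ℝ) : ℝ≥0∞ :=
  ⨆ x ∈ Ioi (0:ℝ),
    ENNReal.ofReal (∫ y in (0:ℝ)..x, (a y)⁻¹ * Real.exp (-2 * Bfun a b y)) *
      ∫⁻ y in Ioi x, ENNReal.ofReal (Real.exp (2 * Bfun a b y))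

/-- `u` is a solution of `(1/2)(a u′)′ + b u′ + λ u = 0` on `(0,∞)` with `u > 0`
and `u(0) = 1`. -/
def IsPosSolution (a b : ℝ → ℝ) (lam : ℝ) (u : ℝ → ℝ) : Prop :=
  (∀ x ∈ Ioi (0:ℝ), 0 < u x) ∧
    ContinuousOn u (Ici 0) ∧ u 0 = 1 ∧
    (∀ x ∈ Ioi (0:ℝ), DifferentiableAt ℝ u x) ∧
    (∀ x ∈ Ioi (0:ℝ), DifferentiableAt ℝ (fun y => a y * deriv u y) x) ∧
    ∀ x ∈ Ioi (0:ℝ),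
      2⁻¹ * deriv (fun y => a y * deriv u y) x + b x * deriv u x + lam * u x = 0

lemma aux_primitive_continuousOn {f : ℝ → ℝ} (hf : ContinuousOn f (Ici 0)) :
    ContinuousOn (fun x => ∫ y in (0:ℝ)..x, f y) (Ici 0) := by
  intro x hx
  have hx0 : (0:ℝ) ≤ x := hx
  have hle : (0:ℝ) ≤ x + 1 := by linarith
  have hint : IntegrableOn f (uIcc 0 (x+1)) volume := by
    rw [uIcc_of_le hle]
    exact (hf.mono (Icc_subset_Ici_self)).integrableOn_Icc
  have hc := intervalIntegral.continuousOn_primitive_interval hint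
  have hxmem : x ∈ uIcc (0:ℝ) (x+1) := by
    rw [uIcc_of_le hle]; exact ⟨hx0, by linarith⟩
  have hmem : uIcc (0:ℝ) (x+1) ∈ 𝓝[Ici 0] x := by
    rw [uIcc_of_le hle]
    have : Icc (0:ℝ) (x+1) = Ici 0 ∩ Iic (x+1) := (Ici_inter_Iic).symm
    rw [this]
    exact inter_mem_nhdsWithin _ (Iic_mem_nhds (by linarith))
  exact (hc x hxmem).mono_of_mem_nhdsWithin hmem

lemma aux_primitive_hasDerivAt {f : ℝ → ℝ} (hf : ContinuousOn f (Ici 0)) {x : ℝ}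
    (hx : 0 < x) : HasDerivAt (fun t => ∫ y in (0:ℝ)..t, f y) (f x) x := by
  have hnhds : Ici (0:ℝ) ∈ 𝓝 x := Ici_mem_nhds hx
  apply intervalIntegral.integral_hasDerivAt_right
  · apply ContinuousOn.intervalIntegrable
    apply hf.mono
    rw [uIcc_of_le hx.le]
    exact Icc_subset_Ici_self
  · exact ContinuousOn.stronglyMeasurableAtFilter isOpen_Ioi
      (hf.mono (Ioi_subset_Ici le_rfl)) x hx
  · exact hf.continuousAt hnhds

lemma aux_tendsto_lintegral (F : ℝ → ℝ≥0∞) (r : ℝ)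
    (hF : AEMeasurable F (volume.restrict (Ioi r))) :
    Tendsto (fun x => ∫⁻ y in Ioc r x, F y) atTop (𝓝 (∫⁻ y in Ioi r, F y)) := by
  have hcov : AECover (volume.restrict (Ioi r)) atTop (fun x : ℝ => Ioc r x) :=
    { ae_eventually_mem := by
        filter_upwards [ae_restrict_mem measurableSet_Ioi] with y hy
        filter_upwards [eventually_ge_atTop y] with x hx
        exact ⟨hy, hx⟩
      measurableSet := fun x => measurableSet_Ioc }
  have h := hcov.lintegral_tendsto_of_countably_generated hF
  refine h.congr fun x => ?_
  rw [Measure.restrict_restrict measurableSet_Ioc,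
    Set.inter_eq_left.mpr Ioc_subset_Ioi_self]

theorem stmt12 (a b : ℝ → ℝ)
    (ha : ContDiffOn ℝ 1 a (Ici 0)) (hapos : ∀ x ∈ Ici (0:ℝ), 0 < a x)
    (hb : ContinuousOn b (Ici 0))
    (hinf : ∫⁻ x in Ioi (0:ℝ),
        ENNReal.ofReal ((a x)⁻¹ * Real.exp (-2 * Bfun a b x)) = ⊤)
    (lam : ℝ) (hlam : 1 / (2 * OmegaPlus a b) < ENNReal.ofReal lam) :
    ¬∃ u : ℝ → ℝ, IsPosSolution a b lam u := by
  rintro ⟨u, hu_pos, hu_cont, hu0, hu_diff, hw_diff, heq⟩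
  set f₁ : ℝ → ℝ := fun y => (a y)⁻¹ * Real.exp (-2 * Bfun a b y) with hf₁def
  set g : ℝ → ℝ := fun y => Real.exp (2 * Bfun a b y) with hgdef
  set s : ℝ → ℝ := fun x => ∫ y in (0:ℝ)..x, f₁ y with hsdef
  set v : ℝ → ℝ := fun x => a x * deriv u x * g x with hvdef
  -- continuity of a on Ici 0
  have hac : ContinuousOn a (Ici 0) := ha.continuousOn
  have hbac : ContinuousOn (fun y => b y / a y) (Ici 0) :=
    hb.div hac (fun x hx => (hapos x hx).ne')
  have hBc : ContinuousOn (Bfun a b) (Ici 0) := aux_primitive_continuousOn hbac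
  have hBd : ∀ x : ℝ, 0 < x → HasDerivAt (Bfun a b) (b x / a x) x := fun x hx =>
    aux_primitive_hasDerivAt hbac hx
  have hf₁c : ContinuousOn f₁ (Ici 0) := by
    exact (hac.inv₀ (fun x hx => (hapos x hx).ne')).mul
      (Real.continuous_exp.comp_continuousOn ((continuousOn_const).mul hBc))
  have hgc : ContinuousOn g (Ici 0) :=
    Real.continuous_exp.comp_continuousOn ((continuousOn_const).mul hBc)
  have hf₁pos : ∀ x ∈ Ici (0:ℝ), 0 < f₁ x := fun x hx => by
    exact mul_pos (inv_pos.mpr (hapos x hx)) (Real.exp_pos _)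
  have hgpos : ∀ x : ℝ, 0 < g x := fun x => Real.exp_pos _
  -- derivative of v
  have hvd : ∀ x : ℝ, 0 < x → HasDerivAt v (-2 * lam * u x * g x) x := by
    intro x hx
    have hxI : x ∈ Ioi (0:ℝ) := hx
    have hw : HasDerivAt (fun y => a y * deriv u y)
        (deriv (fun y => a y * deriv u y) x) x := (hw_diff x hxI).hasDerivAt
    have hg' : HasDerivAt g (2 * (b x / a x) * g x) x := by
      have hB := hBd x hx
      have : HasDerivAt (fun y => 2 * Bfun a b y) (2 * (b x / a x)) x := hB.const_mul 2
      simpa [hgdef, mul_comm, Function.comp_def] using (Real.hasDerivAt_exp (2 * Bfun a b x)).comp x this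
    have hv' : HasDerivAt v
        (deriv (fun y => a y * deriv u y) x * g x +
          (a x * deriv u x) * (2 * (b x / a x) * g x)) x := hw.mul hg'
    have heqx := heq x hxI
    have hne : a x ≠ 0 := (hapos x (le_of_lt hx)).ne'
    have hderiv_w : deriv (fun y => a y * deriv u y) x
        = -2 * (b x * deriv u x) - 2 * (lam * u x) := by linarith
    convert hv' using 1
    rw [hderiv_w]
    field_simp
    ring
  -- (end of part A)
  have hvc : ∀ x : ℝ, 0 < x → ContinuousAt v x := fun x hx => (hvd x hx).continuousAt
  have hderiv_u_eq : ∀ x : ℝ, 0 < x → deriv u x = v x * f₁ x := by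
    intro x hx
    have hne : a x ≠ 0 := (hapos x hx.le).ne'
    have h1 : Real.exp (2 * Bfun a b x) * Real.exp (-2 * Bfun a b x) = 1 := by
      rw [← Real.exp_add]; ring_nf; exact Real.exp_zero
    have : v x * f₁ x
        = deriv u x * (a x * (a x)⁻¹) *
          (Real.exp (2 * Bfun a b x) * Real.exp (-2 * Bfun a b x)) := by
      simp only [hvdef, hf₁def, hgdef]; ring
    rw [this, mul_inv_cancel₀ hne, h1, mul_one, mul_one]
  have hu'c : ContinuousOn (deriv u) (Ioi 0) := by
    intro x hx
    apply ContinuousAt.continuousWithinAt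
    have hev : ∀ᶠ y in 𝓝 x, v y * f₁ y = deriv u y := by
      filter_upwards [Ioi_mem_nhds (show (0:ℝ) < x from hx)] with y hy
      exact (hderiv_u_eq y hy).symm
    exact ContinuousAt.congr
      ((hvc x hx).mul (hf₁c.continuousAt (Ici_mem_nhds hx))) hev
  -- lam > 0 and the key inequality
  have hΩne : 2 * OmegaPlus a b ≠ 0 := by
    intro h; rw [h] at hlam; simp at hlam
  have hkey1 : 1 < ENNReal.ofReal lam * (2 * OmegaPlus a b) :=
    (ENNReal.div_lt_iff (Or.inl hΩne) (Or.inr ENNReal.one_ne_top)).mp hlam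
  have hlam0 : 0 < lam := by
    rcases le_or_gt lam 0 with h | h
    · rw [ENNReal.ofReal_eq_zero.mpr h, zero_mul] at hkey1; simp at hkey1
    · exact h
  -- FTC for v
  have hFTCv : ∀ r x : ℝ, 0 < r → r ≤ x →
      v r - v x = ∫ y in r..x, 2 * lam * (u y * g y) := by
    intro r x hr hrx
    have huIcc : uIcc r x = Icc r x := uIcc_of_le hrx
    have h := intervalIntegral.integral_eq_sub_of_hasDerivAt
      (f := v) (f' := fun y => -(2 * lam * (u y * g y))) (a := r) (b := x)
      (fun y hy => by
        rw [huIcc] at hy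
        have hy0 : 0 < y := lt_of_lt_of_le hr hy.1
        have := hvd y hy0
        exact this.congr_deriv (by ring))
      (by
        apply ContinuousOn.intervalIntegrable
        rw [huIcc]
        have hsub : Icc r x ⊆ Ici (0:ℝ) := fun y hy => le_trans hr.le hy.1
        exact (continuousOn_const.mul ((hu_cont.mono hsub).mul (hgc.mono hsub))).neg)
    rw [intervalIntegral.integral_neg] at h
    linarith
  have hv_anti : ∀ r x : ℝ, 0 < r → r ≤ x → v x ≤ v r := by
    intro r x hr hrx
    have h := hFTCv r x hr hrx
    have hle : 0 ≤ ∫ y in r..x, 2 * lam * (u y * g y) := by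
      apply intervalIntegral.integral_nonneg hrx
      intro y hy
      have hy0 : 0 < y := lt_of_lt_of_le hr hy.1
      have := mul_pos (hu_pos y hy0) (hgpos y)
      nlinarith
    linarith
  -- measurability and divergence of the scale lintegral
  have hf₁E_meas : ∀ r : ℝ, 0 ≤ r →
      AEMeasurable (fun y => ENNReal.ofReal (f₁ y)) (volume.restrict (Ioi r)) := by
    intro r hr
    exact ENNReal.measurable_ofReal.comp_aemeasurable
      (((hf₁c.mono (fun y (hy : y ∈ Ioi r) => le_trans hr hy.le)).aemeasurable
        measurableSet_Ioi))
  have hgE_meas : ∀ r : ℝ, 0 ≤ r →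
      AEMeasurable (fun y => ENNReal.ofReal (g y)) (volume.restrict (Ioi r)) := by
    intro r hr
    exact ENNReal.measurable_ofReal.comp_aemeasurable
      (((hgc.mono (fun y (hy : y ∈ Ioi r) => le_trans hr hy.le)).aemeasurable
        measurableSet_Ioi))
  have hIoiTop : ∀ r : ℝ, 0 < r → ∫⁻ y in Ioi r, ENNReal.ofReal (f₁ y) = ⊤ := by
    intro r hr
    have hsplit : Ioc 0 r ∪ Ioi r = Ioi (0:ℝ) := Ioc_union_Ioi_eq_Ioi hr.le
    have hdisj : Disjoint (Ioc (0:ℝ) r) (Ioi r) := Ioc_disjoint_Ioi le_rfl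
    rw [← hsplit, lintegral_union measurableSet_Ioi hdisj] at hinf
    obtain ⟨C, hC⟩ := (isCompact_Icc (a := (0:ℝ)) (b := r)).exists_bound_of_continuousOn
      (hf₁c.mono Icc_subset_Ici_self)
    have hfin : ∫⁻ y in Ioc 0 r, ENNReal.ofReal (f₁ y) ≠ ⊤ := by
      have hle : ∫⁻ y in Ioc 0 r, ENNReal.ofReal (f₁ y)
          ≤ ∫⁻ _ in Ioc 0 r, ENNReal.ofReal C := by
        apply setLIntegral_mono measurable_const
        intro y hy
        exact ENNReal.ofReal_le_ofReal
          (le_trans (le_abs_self _) (hC y ⟨hy.1.le, hy.2⟩))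
      refine ne_top_of_le_ne_top ?_ hle
      rw [setLIntegral_const, Real.volume_Ioc]
      exact (ENNReal.mul_lt_top ENNReal.ofReal_lt_top ENNReal.ofReal_lt_top).ne
    by_contra hne
    exact (ENNReal.add_ne_top.mpr ⟨hfin, hne⟩) hinf
  -- ofReal of interval integral = set lintegral
  have hconv : ∀ (F : ℝ → ℝ), ContinuousOn F (Ici 0) → (∀ y ∈ Ici (0:ℝ), 0 ≤ F y) →
      ∀ r x : ℝ, 0 ≤ r → r ≤ x →
      ENNReal.ofReal (∫ y in r..x, F y) = ∫⁻ y in Ioc r x, ENNReal.ofReal (F y) := by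
    intro F hFc hFnn r x hr hrx
    have hsub : Icc r x ⊆ Ici (0:ℝ) := fun y hy => le_trans hr hy.1
    rw [intervalIntegral.integral_of_le hrx]
    rw [ofReal_integral_eq_lintegral_ofReal]
    · exact ((hFc.mono hsub).integrableOn_Icc).mono_set Ioc_subset_Icc_self
    · exact (ae_restrict_iff' measurableSet_Ioc).mpr
        (ae_of_all _ fun y hy => hFnn y (le_trans hr hy.1.le))
  have hv_nonneg : ∀ r : ℝ, 0 < r → 0 ≤ v r := by
    intro r hr
    by_contra hneg
    push_neg at hneg
    have htend := aux_tendsto_lintegral _ r (hf₁E_meas r hr.le)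
    rw [hIoiTop r hr] at htend
    have hdpos : 0 ≤ u r / (-v r) := div_nonneg (hu_pos r hr).le (by linarith)
    obtain ⟨x, hx1, hx2⟩ := ((htend.eventually
      (Ioi_mem_nhds (show ENNReal.ofReal (u r / (-v r)) < ⊤ from ENNReal.ofReal_lt_top))).and
      (eventually_ge_atTop (r + 1))).exists
    have hrx : r ≤ x := by linarith
    rw [← hconv f₁ hf₁c (fun y hy => (hf₁pos y hy).le) r x hr.le hrx] at hx1
    set I : ℝ := ∫ y in r..x, f₁ y with hIdef
    have hIgt : u r / (-v r) < I :=
      (ENNReal.ofReal_lt_ofReal_iff_of_nonneg hdpos).mp hx1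
    -- FTC for u on [r,x]
    have hsubIcc : Icc r x ⊆ Ioi (0:ℝ) := fun y hy => lt_of_lt_of_le hr hy.1
    have hu_sub : u x - u r = ∫ y in r..x, deriv u y := by
      refine (intervalIntegral.integral_eq_sub_of_hasDerivAt (fun y hy => ?_) ?_).symm
      · rw [uIcc_of_le hrx] at hy
        exact (hu_diff y (hsubIcc hy)).hasDerivAt
      · apply ContinuousOn.intervalIntegrable
        rw [uIcc_of_le hrx]
        exact hu'c.mono hsubIcc
    have hle : ∫ y in r..x, deriv u y ≤ ∫ y in r..x, v r * f₁ y := by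
      apply intervalIntegral.integral_mono_on hrx
      · exact (hu'c.mono hsubIcc).intervalIntegrable_of_Icc hrx
      · exact (continuousOn_const.mul (hf₁c.mono (fun y hy =>
          mem_Ici.mpr (hsubIcc hy).le))).intervalIntegrable_of_Icc hrx
      · intro y hy
        rw [hderiv_u_eq y (hsubIcc hy)]
        exact mul_le_mul_of_nonneg_right (hv_anti r y hr hy.1)
          (hf₁pos y (mem_Ici.mpr (hsubIcc hy).le)).le
    rw [intervalIntegral.integral_const_mul] at hle
    have hvI : v r * I < -u r := by
      have h2 := (div_lt_iff₀ (show (0:ℝ) < -v r by linarith)).mp hIgt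
      nlinarith
    have := hu_pos x (hsubIcc ⟨hrx, le_rfl⟩)
    nlinarith
  have hu_mono : MonotoneOn u (Ici 0) := by
    apply monotoneOn_of_deriv_nonneg (convex_Ici 0) hu_cont
    · intro x hx
      rw [interior_Ici] at hx
      exact (hu_diff x hx).differentiableWithinAt
    · intro x hx
      rw [interior_Ici] at hx
      rw [hderiv_u_eq x hx]
      exact mul_nonneg (hv_nonneg x hx) (hf₁pos x (mem_Ici.mpr (le_of_lt hx))).le
  have hu_ge1 : ∀ x : ℝ, 0 ≤ x → 1 ≤ u x := by
    intro x hx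
    have := hu_mono (self_mem_Ici) hx hx
    rwa [hu0] at this
  have hu_sub : ∀ ε x : ℝ, 0 < ε → ε ≤ x → u x - u ε = ∫ y in ε..x, deriv u y := by
    intro ε x hε hεx
    have hsubIcc : Icc ε x ⊆ Ioi (0:ℝ) := fun y hy => lt_of_lt_of_le hε hy.1
    refine (intervalIntegral.integral_eq_sub_of_hasDerivAt (fun y hy => ?_) ?_).symm
    · rw [uIcc_of_le hεx] at hy
      exact (hu_diff y (hsubIcc hy)).hasDerivAt
    · apply ContinuousOn.intervalIntegrable
      rw [uIcc_of_le hεx]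
      exact hu'c.mono hsubIcc
  have hs_sub : ∀ ε x : ℝ, 0 ≤ ε → ε ≤ x → ∫ y in ε..x, f₁ y = s x - s ε := by
    intro ε x hε hεx
    have h1 : IntervalIntegrable f₁ volume 0 ε := by
      apply ContinuousOn.intervalIntegrable
      rw [uIcc_of_le hε]
      exact hf₁c.mono Icc_subset_Ici_self
    have h2 : IntervalIntegrable f₁ volume ε x := by
      apply ContinuousOn.intervalIntegrable
      rw [uIcc_of_le hεx]
      exact hf₁c.mono (fun y hy => le_trans hε hy.1)
    have := intervalIntegral.integral_add_adjacent_intervals h1 h2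
    simp only [hsdef]
    linarith
  -- extract x₀ from the key inequality
  rw [OmegaPlus] at hkey1
  simp_rw [ENNReal.mul_iSup] at hkey1
  rw [lt_iSup_iff] at hkey1
  obtain ⟨x₀, hkey1⟩ := hkey1
  rw [lt_iSup_iff] at hkey1
  obtain ⟨hx₀, hkey2⟩ := hkey1
  have hx₀0 : (0:ℝ) < x₀ := hx₀
  have hkey2' : 1 < ENNReal.ofReal lam *
      (2 * (ENNReal.ofReal (s x₀) * ∫⁻ y in Ioi x₀, ENNReal.ofReal (g y))) := hkey2
  -- the key lower bound for v
  have hKnn : ∀ x : ℝ, x₀ ≤ x → 0 ≤ ∫ y in x₀..x, g y := by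
    intro x hx
    exact intervalIntegral.integral_nonneg hx (fun y _ => (hgpos y).le)
  have hvK : ∀ r x : ℝ, 0 < r → r ≤ x₀ → x₀ ≤ x →
      2 * lam * u x₀ * (∫ y in x₀..x, g y) ≤ v r := by
    intro r x hr hrx₀ hx₀x
    have hrx : r ≤ x := le_trans hrx₀ hx₀x
    have h := hFTCv r x hr hrx
    have hi1 : IntervalIntegrable (fun y => 2 * lam * (u y * g y)) volume r x₀ := by
      apply ContinuousOn.intervalIntegrable
      rw [uIcc_of_le hrx₀]
      have hsub : Icc r x₀ ⊆ Ici (0:ℝ) := fun y hy => le_trans hr.le hy.1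
      exact continuousOn_const.mul ((hu_cont.mono hsub).mul (hgc.mono hsub))
    have hi2 : IntervalIntegrable (fun y => 2 * lam * (u y * g y)) volume x₀ x := by
      apply ContinuousOn.intervalIntegrable
      rw [uIcc_of_le hx₀x]
      have hsub : Icc x₀ x ⊆ Ici (0:ℝ) := fun y hy => le_trans hx₀0.le hy.1
      exact continuousOn_const.mul ((hu_cont.mono hsub).mul (hgc.mono hsub))
    have hsplit := intervalIntegral.integral_add_adjacent_intervals hi1 hi2
    have hnn1 : 0 ≤ ∫ y in r..x₀, 2 * lam * (u y * g y) := by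
      apply intervalIntegral.integral_nonneg hrx₀
      intro y hy
      have hy0 : 0 < y := lt_of_lt_of_le hr hy.1
      have := mul_pos (hu_pos y hy0) (hgpos y)
      nlinarith
    have hmono2 : ∫ y in x₀..x, 2 * lam * u x₀ * g y
        ≤ ∫ y in x₀..x, 2 * lam * (u y * g y) := by
      apply intervalIntegral.integral_mono_on hx₀x
      · have hsub : Icc x₀ x ⊆ Ici (0:ℝ) := fun y hy => le_trans hx₀0.le hy.1
        exact (continuousOn_const.mul (hgc.mono hsub)).intervalIntegrable_of_Icc hx₀x
      · exact hi2.mono_set (by rw [uIcc_of_le hx₀x])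
      · intro y hy
        have huy : u x₀ ≤ u y := hu_mono hx₀0.le (le_trans hx₀0.le hy.1) hy.1
        have hgy := (hgpos y).le
        nlinarith [mul_le_mul_of_nonneg_left (mul_le_mul_of_nonneg_right huy hgy)
          (show (0:ℝ) ≤ 2 * lam by linarith)]
    rw [intervalIntegral.integral_const_mul] at hmono2
    have hvx : 0 ≤ v x := hv_nonneg x (lt_of_lt_of_le hx₀0 hx₀x)
    linarith
  -- case split on finiteness of the tail integral
  set J : ℝ≥0∞ := ∫⁻ y in Ioi x₀, ENNReal.ofReal (g y) with hJdef
  have htend := aux_tendsto_lintegral (fun y => ENNReal.ofReal (g y)) x₀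
    (hgE_meas x₀ hx₀0.le)
  by_cases hJtop : J = ⊤
  · -- tail integral infinite: contradiction with finiteness of v x₀
    rw [← hJdef, hJtop] at htend
    have hdnn : 0 ≤ v x₀ / (2 * lam) := div_nonneg (hv_nonneg x₀ hx₀0) (by linarith)
    obtain ⟨x, hx1, hx2⟩ := ((htend.eventually
      (Ioi_mem_nhds (show ENNReal.ofReal (v x₀ / (2 * lam)) < ⊤ from ENNReal.ofReal_lt_top))).and
      (eventually_ge_atTop x₀)).exists
    rw [← hconv g hgc (fun y _ => (hgpos y).le) x₀ x hx₀0.le hx2] at hx1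
    have hKgt : v x₀ / (2 * lam) < ∫ y in x₀..x, g y :=
      (ENNReal.ofReal_lt_ofReal_iff_of_nonneg hdnn).mp hx1
    have hle := hvK x₀ x hx₀0 le_rfl hx2
    have hu1 : 1 ≤ u x₀ := hu_ge1 x₀ hx₀0.le
    have hKpos : 0 ≤ ∫ y in x₀..x, g y := hKnn x hx2
    have h2 := (div_lt_iff₀ (show (0:ℝ) < 2 * lam by linarith)).mp hKgt
    nlinarith [mul_le_mul_of_nonneg_left (mul_le_mul_of_nonneg_right hu1 hKpos)
      (show (0:ℝ) ≤ 2 * lam by linarith)]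
  · -- tail integral finite
    set M : ℝ := J.toReal with hMdef
    have hJM : J = ENNReal.ofReal M := (ENNReal.ofReal_toReal hJtop).symm
    have hS0 : 0 ≤ s x₀ :=
      intervalIntegral.integral_nonneg hx₀0.le (fun y hy => (hf₁pos y hy.1).le)
    have hreal : 1 < lam * (2 * (s x₀ * M)) := by
      rw [hJM, ← ENNReal.ofReal_mul hS0,
        show (2:ℝ≥0∞) = ENNReal.ofReal 2 by simp,
        ← ENNReal.ofReal_mul (by norm_num : (0:ℝ) ≤ 2),
        ← ENNReal.ofReal_mul hlam0.le,
        show (1:ℝ≥0∞) = ENNReal.ofReal 1 by simp] at hkey2'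
      exact (ENNReal.ofReal_lt_ofReal_iff_of_nonneg zero_le_one).mp hkey2'
    -- K x tends to M
    have hKtend : Tendsto (fun x => ∫ y in x₀..x, g y) atTop (𝓝 M) := by
      have h1 : Tendsto (fun x => (∫⁻ y in Ioc x₀ x, ENNReal.ofReal (g y)).toReal)
          atTop (𝓝 M) := by
        rw [hMdef, hJdef]
        exact (ENNReal.tendsto_toReal hJtop).comp htend
      apply h1.congr'
      filter_upwards [eventually_ge_atTop x₀] with x hx
      rw [← hconv g hgc (fun y _ => (hgpos y).le) x₀ x hx₀0.le hx,
        ENNReal.toReal_ofReal (hKnn x hx)]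
    have hxev : ∀ᶠ x in atTop, 1 < lam * (2 * (s x₀ * (∫ y in x₀..x, g y))) := by
      have : Tendsto (fun x => lam * (2 * (s x₀ * (∫ y in x₀..x, g y)))) atTop
          (𝓝 (lam * (2 * (s x₀ * M)))) := by
        exact (((hKtend.const_mul (s x₀)).const_mul 2).const_mul lam)
      exact this.eventually (Ioi_mem_nhds hreal)
    obtain ⟨x, hx1, hx2⟩ := (hxev.and (eventually_ge_atTop x₀)).exists
    set K : ℝ := ∫ y in x₀..x, g y with hKdef
    have hKnn' : 0 ≤ K := hKnn x hx2
    -- choose ε near 0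
    have hsc : ContinuousOn s (Ici 0) := aux_primitive_continuousOn hf₁c
    have hs0 : s 0 = 0 := intervalIntegral.integral_same
    have hstend : Tendsto s (𝓝[>] (0:ℝ)) (𝓝 0) := by
      have := (hsc 0 self_mem_Ici).tendsto
      rw [hs0] at this
      exact this.mono_left (nhdsWithin_mono 0 Ioi_subset_Ici_self)
    have hεev : ∀ᶠ ε in 𝓝[>] (0:ℝ), 1 < lam * (2 * ((s x₀ - s ε) * K)) := by
      have : Tendsto (fun ε => lam * (2 * ((s x₀ - s ε) * K))) (𝓝[>] (0:ℝ))
          (𝓝 (lam * (2 * ((s x₀ - 0) * K)))) := by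
        apply Tendsto.const_mul
        apply Tendsto.const_mul
        exact (Tendsto.sub tendsto_const_nhds hstend).mul_const K
      apply this.eventually
      apply Ioi_mem_nhds
      simpa using hx1
    have hεlt : ∀ᶠ ε in 𝓝[>] (0:ℝ), ε < x₀ :=
      eventually_nhdsWithin_of_eventually_nhds (eventually_lt_nhds hx₀0)
    obtain ⟨ε, hε1, hε2, hε0⟩ :=
      (hεev.and (hεlt.and self_mem_nhdsWithin)).exists
    have hε0' : (0:ℝ) < ε := hε0
    -- final contradiction
    have h1 := hu_sub ε x₀ hε0' hε2.le
    have h2 : ∫ y in ε..x₀, 2 * lam * u x₀ * K * f₁ y ≤ ∫ y in ε..x₀, deriv u y := by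
      apply intervalIntegral.integral_mono_on hε2.le
      · have hsub : Icc ε x₀ ⊆ Ici (0:ℝ) := fun y hy => le_trans hε0'.le hy.1
        exact (continuousOn_const.mul (hf₁c.mono hsub)).intervalIntegrable_of_Icc hε2.le
      · have hsub : Icc ε x₀ ⊆ Ioi (0:ℝ) := fun y hy => lt_of_lt_of_le hε0' hy.1
        exact (hu'c.mono hsub).intervalIntegrable_of_Icc hε2.le
      · intro y hy
        have hy0 : 0 < y := lt_of_lt_of_le hε0' hy.1
        rw [hderiv_u_eq y hy0]
        exact mul_le_mul_of_nonneg_right (hvK y x hy0 hy.2 hx2) (hf₁pos y hy0.le).le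
    rw [intervalIntegral.integral_const_mul, hs_sub ε x₀ hε0'.le hε2.le] at h2
    have hu1 : 1 ≤ u x₀ := hu_ge1 x₀ hx₀0.le
    have huε : 1 ≤ u ε := hu_ge1 ε hε0'.le
    nlinarith [mul_lt_mul_of_pos_left hε1 (show (0:ℝ) < u x₀ by linarith)]
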